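/- arXiv:2109.03025 — 2 statements merged into one kernel-verified Lean document; each statement's English description precedes it below -/
import Mathlib

section
/- Let I be a finite set of data vectors of arity k and dimension d, and let y ∈ I. Then y is reversible in Perm(I) if and only if P(y) is reversible in P(I), i.e. −y ∈ Σ_ℕ(Perm(I)) if and only if −P(y) ∈ Σ_ℕ(P(I)). -/
/-- A data vector of dimension `d`: a finitely supported function from finite
subsets of the data domain `ℕ` (the `k`-element ones being relevant) to
vectors in `ℤ^d`. -/
abbrev HG (d : ℕ) := (Finset ℕ) →₀ (Fin d → ℤ)

/-- `v` is a data vector of arity `k`: it is supported on `k`-element sets. -/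
def IsHG (k : ℕ) {d : ℕ} (v : HG d) : Prop := ∀ e ∈ v.support, e.card = k

/-- The action of a data permutation `π : ℕ ≃ ℕ` on a data vector:
`(v ∘ π)({α₁, …, α_k}) = v({π α₁, …, π α_k})`. -/
def permDV {d : ℕ} (π : ℕ ≃ ℕ) (v : HG d) : HG d :=
  Finsupp.equivMapDomain π.symm.finsetCongr v

/-- `Perm(I)`: the closure of the set `I` of data vectors under data
permutations. -/
def Perm {d : ℕ} (I : Set (HG d)) : Set (HG d) :=
  {w | ∃ v ∈ I, ∃ π : ℕ ≃ ℕ, w = permDV π v}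

/-- `Σ_ℕ(U)` for a set `U` of data vectors: all finite sums of members of `U`
with nonnegative-integer coefficients. -/
def NsumDV {d : ℕ} (U : Set (HG d)) : Set (HG d) :=
  {x | ∃ (l : ℕ) (c : Fin l → ℕ) (u : Fin l → HG d),
      (∀ i, u i ∈ U) ∧ x = ∑ i, c i • u i}

/-- `Σ_ℕ(U)` for a set `U` of vectors in `ℤ^d`: all finite sums of members of
`U` with nonnegative-integer coefficients. -/
def NsumV {d : ℕ} (U : Set (Fin d → ℤ)) : Set (Fin d → ℤ) :=
  {x | ∃ (l : ℕ) (c : Fin l → ℕ) (u : Fin l → (Fin d → ℤ)),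
      (∀ i, u i ∈ U) ∧ x = ∑ i, c i • u i}

/-- The data projection `P(v) = Σ_x v(x) ∈ ℤ^d` of a data vector `v`. -/
def proj {d : ℕ} (v : HG d) : Fin d → ℤ := ∑ e ∈ v.support, v e

lemma nsum_mem_iff {M : Type*} [AddCommMonoid M] (U : Set M) (x : M) :
    (∃ (l : ℕ) (c : Fin l → ℕ) (u : Fin l → M),
      (∀ i, u i ∈ U) ∧ x = ∑ i, c i • u i) ↔ x ∈ AddSubmonoid.closure U := by
  constructor
  · rintro ⟨l, c, u, hu, rfl⟩
    exact AddSubmonoid.sum_mem _ fun i _ =>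
      AddSubmonoid.nsmul_mem _ (AddSubmonoid.subset_closure (hu i)) _
  · intro hx
    induction hx using AddSubmonoid.closure_induction with
    | mem x h => exact ⟨1, fun _ => 1, fun _ => x, fun _ => h, by simp⟩
    | zero => exact ⟨0, fun i => i.elim0, fun i => i.elim0, fun i => i.elim0, by simp⟩
    | add a b ha hb iha ihb =>
      obtain ⟨l1, c1, u1, hu1, rfl⟩ := iha
      obtain ⟨l2, c2, u2, hu2, rfl⟩ := ihb
      refine ⟨l1 + l2, Fin.addCases c1 c2, Fin.addCases u1 u2, ?_, ?_⟩
      · intro i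
        rcases Nat.lt_or_ge i.val l1 with h | h
        · have : i = Fin.castAdd l2 ⟨i, h⟩ := by simp [Fin.ext_iff]
          rw [this]
          show Fin.addCases u1 u2 (Fin.castAdd l2 ⟨i, h⟩) ∈ U
          rw [Fin.addCases_left]; exact hu1 _
        · have : i = Fin.natAdd l1 ⟨i - l1, by omega⟩ := by simp [Fin.ext_iff]; omega
          rw [this]
          show Fin.addCases u1 u2 (Fin.natAdd l1 ⟨i - l1, by omega⟩) ∈ U
          rw [Fin.addCases_right]; exact hu2 _
      · rw [Fin.sum_univ_add]
        simp

-- proj as hom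
noncomputable def projHom (d : ℕ) : HG d →+ (Fin d → ℤ) :=
  Finsupp.liftAddHom (fun _ => AddMonoidHom.id _)

lemma proj_eq (d : ℕ) (v : HG d) : proj v = projHom d v := rfl

lemma permDV_eq {d : ℕ} (π : ℕ ≃ ℕ) (v : HG d) :
    permDV π v = Finsupp.domCongr (M := Fin d → ℤ) π.symm.finsetCongr v := rfl

lemma proj_permDV {d : ℕ} (π : ℕ ≃ ℕ) (v : HG d) : proj (permDV π v) = proj v := by
  show (Finsupp.equivMapDomain π.symm.finsetCongr v).sum (fun _ x => x) = v.sum fun _ x => x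
  rw [Finsupp.sum_equivMapDomain]


noncomputable def glue {α : Type*} [Fintype α] [DecidableEq α] (s t : Finset α)
    (h : s.card = t.card) : Equiv.Perm α :=
  ((Equiv.Set.sumCompl (s : Set α)).symm.trans
    (Equiv.sumCongr
      ((Equiv.subtypeEquivRight (fun x => by simp) :
          {x // x ∈ (s : Set α)} ≃ {x // x ∈ s}).trans
        ((Finset.equivOfCardEq h).trans
          (Equiv.subtypeEquivRight (fun x => by simp) :
            {x // x ∈ t} ≃ {x // x ∈ (t : Set α)})))
      ((Equiv.subtypeEquivRight (fun x => by simp) :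
          {x // x ∈ ((s : Set α))ᶜ} ≃ {x // x ∈ sᶜ}).trans
        ((Finset.equivOfCardEq (by
            rw [Finset.card_compl, Finset.card_compl, h])).trans
          (Equiv.subtypeEquivRight (fun x => by simp) :
            {x // x ∈ tᶜ} ≃ {x // x ∈ ((t : Set α))ᶜ}))))).trans
    (Equiv.Set.sumCompl (t : Set α))

lemma glue_mem {α : Type*} [Fintype α] [DecidableEq α] {s t : Finset α}
    (h : s.card = t.card) {a : α} (ha : a ∈ s) : glue s t h a ∈ t := by
  unfold glue
  simp only [Equiv.trans_apply]
  rw [Equiv.Set.sumCompl_symm_apply_of_mem (by simpa using ha)]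
  simp only [Equiv.sumCongr_apply, Sum.map_inl, Equiv.Set.sumCompl_apply_inl]
  simp


def extN (N : ℕ) (σ : Equiv.Perm (Fin N)) : Equiv.Perm ℕ :=
  σ.extendDomain Fin.equivSubtype

lemma extN_lt {N : ℕ} (σ : Equiv.Perm (Fin N)) {a : ℕ} (h : a < N) :
    extN N σ a = (σ ⟨a, h⟩ : Fin N).val := by
  rw [extN, Equiv.Perm.extendDomain_apply_subtype σ Fin.equivSubtype h]
  rfl

lemma extN_ge {N : ℕ} (σ : Equiv.Perm (Fin N)) {a : ℕ} (h : ¬ a < N) :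
    extN N σ a = a :=
  Equiv.Perm.extendDomain_apply_not_subtype _ _ h

lemma extN_mul {N : ℕ} (σ τ : Equiv.Perm (Fin N)) :
    extN N σ * extN N τ = extN N (σ * τ) :=
  Equiv.Perm.extendDomain_mul _ _ _

lemma extN_one (N : ℕ) : extN N 1 = 1 := Equiv.Perm.extendDomain_one _

lemma permDV_apply {d : ℕ} (π : ℕ ≃ ℕ) (v : HG d) (e : Finset ℕ) :
    permDV π v e = v (e.map π.toEmbedding) := by
  show Finsupp.equivMapDomain _ v e = _
  rw [Finsupp.equivMapDomain_apply, Equiv.finsetCongr_symm, Equiv.symm_symm,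
    Equiv.finsetCongr_apply]

lemma permDV_one {d : ℕ} (v : HG d) : permDV (1 : Equiv.Perm ℕ) v = v := by
  ext e
  rw [permDV_apply]
  simp [Finset.map_eq_image]

lemma map_mul_emb {N : ℕ} (σ τ : Equiv.Perm (Fin N)) (e : Finset ℕ) :
    e.map (extN N (σ * τ)).toEmbedding
      = (e.map (extN N τ).toEmbedding).map (extN N σ).toEmbedding := by
  rw [Finset.map_map]
  congr 1
  ext a
  simp [← extN_mul, Equiv.Perm.mul_apply]

lemma map_extN_inv {N : ℕ} (σ : Equiv.Perm (Fin N)) (e : Finset ℕ) :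
    (e.map (extN N σ).toEmbedding).map (extN N σ⁻¹).toEmbedding = e := by
  rw [← map_mul_emb, inv_mul_cancel, extN_one]
  simp [Finset.map_eq_image]

lemma mem_T_map {N k : ℕ} (σ : Equiv.Perm (Fin N)) {e : Finset ℕ}
    (he : e ∈ (Finset.range N).powersetCard k) :
    e.map (extN N σ).toEmbedding ∈ (Finset.range N).powersetCard k := by
  rw [Finset.mem_powersetCard] at he ⊢
  refine ⟨?_, by rw [Finset.card_map]; exact he.2⟩
  intro a ha
  rw [Finset.mem_map] at ha
  obtain ⟨b, hb, rfl⟩ := ha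
  have hbN : b < N := Finset.mem_range.mp (he.1 hb)
  rw [Equiv.coe_toEmbedding, extN_lt σ hbN]
  exact Finset.mem_range.mpr (σ ⟨b, hbN⟩).isLt

lemma mem_T_map_iff {N k : ℕ} (σ : Equiv.Perm (Fin N)) {e : Finset ℕ} :
    e.map (extN N σ).toEmbedding ∈ (Finset.range N).powersetCard k
      ↔ e ∈ (Finset.range N).powersetCard k := by
  constructor
  · intro h
    have := mem_T_map σ⁻¹ h
    rwa [map_extN_inv] at this
  · exact mem_T_map σ

lemma key_zero {d k N : ℕ} (hkN : k ≤ N) (u : HG d)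
    (hsupp : ∀ e ∈ u.support, e.card = k ∧ e ⊆ Finset.range N)
    (hP : proj u = 0) :
    ∑ σ : Equiv.Perm (Fin N), permDV (extN N σ) u = 0 := by
  set T := (Finset.range N).powersetCard k with hT
  have hmemT : ∀ x, x ∈ u.support → x ∈ T := by
    intro x hx
    exact Finset.mem_powersetCard.mpr ⟨(hsupp x hx).2, (hsupp x hx).1⟩
  have hsuppT : ∀ x, x ∉ T → u x = 0 := by
    intro x hx
    by_contra h
    exact hx (hmemT x (Finsupp.mem_support_iff.mpr h))
  have hsumT : ∀ σ : Equiv.Perm (Fin N),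
      ∑ x ∈ T, u (x.map (extN N σ).toEmbedding) = 0 := by
    intro σ
    have h1 : ∑ x ∈ T, u (x.map (extN N σ).toEmbedding) = ∑ x ∈ T, u x := by
      refine Finset.sum_nbij' (fun x => x.map (extN N σ).toEmbedding)
        (fun x => x.map (extN N σ⁻¹).toEmbedding) ?_ ?_ ?_ ?_ ?_
      · intro a ha; exact mem_T_map σ ha
      · intro a ha; exact mem_T_map σ⁻¹ ha
      · intro a _; exact map_extN_inv σ a
      · intro a _
        have := map_extN_inv σ⁻¹ a
        rwa [inv_inv] at this
      · intro a _; rfl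
    have h2 : ∑ x ∈ T, u x = proj u := by
      rw [proj]
      exact (Finset.sum_subset hmemT
        (fun x _ hx => Finsupp.notMem_support_iff.mp hx)).symm
    rw [h1, h2, hP]
  have hconst : ∀ e ∈ T, ∀ e' ∈ T,
      ∑ σ : Equiv.Perm (Fin N), u (e'.map (extN N σ).toEmbedding)
        = ∑ σ : Equiv.Perm (Fin N), u (e.map (extN N σ).toEmbedding) := by
    intro e he e' he'
    rw [Finset.mem_powersetCard] at he he'
    have hlt : ∀ a ∈ e, a < N := fun a ha => Finset.mem_range.mp (he.1 ha)
    have hlt' : ∀ a ∈ e', a < N := fun a ha => Finset.mem_range.mp (he'.1 ha)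
    have hcard : (e.attachFin hlt).card = (e'.attachFin hlt').card := by
      rw [Finset.card_attachFin, Finset.card_attachFin, he.2, he'.2]
    set τ := glue _ _ hcard with hτdef
    have hτ : e.map (extN N τ).toEmbedding = e' := by
      refine Finset.eq_of_subset_of_card_le ?_ ?_
      · intro a ha
        rw [Finset.mem_map] at ha
        obtain ⟨b, hb, rfl⟩ := ha
        rw [Equiv.coe_toEmbedding, extN_lt τ (hlt b hb)]
        have : (⟨b, hlt b hb⟩ : Fin N) ∈ e.attachFin hlt := by
          simp [Finset.mem_attachFin, hb]
        have := glue_mem hcard this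
        rw [Finset.mem_attachFin] at this
        exact this
      · rw [Finset.card_map, he.2, he'.2]
    calc ∑ σ : Equiv.Perm (Fin N), u (e'.map (extN N σ).toEmbedding)
        = ∑ σ : Equiv.Perm (Fin N),
            u ((e.map (extN N τ).toEmbedding).map (extN N σ).toEmbedding) := by
          rw [hτ]
      _ = ∑ σ : Equiv.Perm (Fin N), u (e.map (extN N (σ * τ)).toEmbedding) := by
          refine Finset.sum_congr rfl fun σ _ => ?_
          rw [map_mul_emb]
      _ = ∑ σ : Equiv.Perm (Fin N), u (e.map (extN N σ).toEmbedding) := by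
          exact Fintype.sum_equiv (Equiv.mulRight τ) _ _ (fun σ => rfl)
  refine Finsupp.ext fun e => ?_
  rw [Finsupp.finset_sum_apply]
  simp only [permDV_apply, Finsupp.coe_zero, Pi.zero_apply]
  by_cases he : e ∈ T
  · have h1 : ∑ e' ∈ T, ∑ σ : Equiv.Perm (Fin N),
        u (e'.map (extN N σ).toEmbedding) = 0 := by
      rw [Finset.sum_comm]
      exact Finset.sum_eq_zero fun σ _ => hsumT σ
    have h2 : ∑ e' ∈ T, ∑ σ : Equiv.Perm (Fin N), u (e'.map (extN N σ).toEmbedding)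
        = T.card • ∑ σ : Equiv.Perm (Fin N), u (e.map (extN N σ).toEmbedding) := by
      rw [Finset.sum_congr rfl (fun e' he' => hconst e he e' he'), Finset.sum_const]
    have hTne : T.Nonempty := Finset.powersetCard_nonempty.mpr (by simpa using hkN)
    have hc0 : (T.card : ℤ) ≠ 0 := by
      exact_mod_cast Finset.card_ne_zero.mpr hTne
    have h3 := h2.symm.trans h1
    funext i
    have h4 := congrFun h3 i
    simp only [Pi.smul_apply, Finset.sum_apply, Pi.zero_apply, nsmul_eq_mul] at h4 ⊢
    rcases mul_eq_zero.mp h4 with h | h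
    · exact absurd h hc0
    · exact h
  · refine Finset.sum_eq_zero fun σ _ => ?_
    have : e.map (extN N σ).toEmbedding ∉ T := fun hc => he ((mem_T_map_iff σ).mp hc)
    exact hsuppT _ this

/-- **Lemma (projection preserves reversibility).**
Let `I` be a finite set of data vectors of arity `k` and dimension `d`, and
let `y ∈ I`.  Then `y` is reversible in `Perm(I)` iff `P(y)` is reversible in
`P(I)`, i.e. `−y ∈ Σ_ℕ(Perm(I))` iff `−P(y) ∈ Σ_ℕ(P(I))`. -/
theorem reversibility_characterisation
    (k d : ℕ) (hk : 1 ≤ k) (hd : 1 ≤ d)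
    (I : Set (HG d)) (hIfin : I.Finite) (hI : ∀ v ∈ I, IsHG k v)
    (y : HG d) (hy : y ∈ I) :
    -y ∈ NsumDV (Perm I) ↔ -(proj y) ∈ NsumV (proj '' I) := by
  constructor
  · rintro ⟨l, c, w, hw, hsum⟩
    choose v hvI π hπ using hw
    refine ⟨l, c, fun i => proj (v i), fun i => ⟨v i, hvI i, rfl⟩, ?_⟩
    have hneg : -proj y = projHom d (-y) := by rw [map_neg, ← proj_eq]
    rw [hneg, hsum, map_sum]
    refine Finset.sum_congr rfl fun i _ => ?_
    rw [AddMonoidHom.map_nsmul, ← proj_eq, hπ i, proj_permDV]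
  · rintro ⟨l, c, p, hp, hsum⟩
    choose v hvI hvp using hp
    set u : HG d := y + ∑ i, c i • v i with hu
    have hprojU : proj u = 0 := by
      have h1 : proj u = proj y + ∑ i, c i • p i := by
        rw [proj_eq, hu, map_add, map_sum, ← proj_eq]
        congr 1
        refine Finset.sum_congr rfl fun i _ => ?_
        rw [AddMonoidHom.map_nsmul, ← proj_eq, hvp]
      rw [h1, ← hsum]
      exact add_neg_cancel _
    set A : Finset ℕ :=
      y.support.sup id ⊔ Finset.univ.sup (fun i => (v i).support.sup id) with hA
    set N : ℕ := k ⊔ (A.sup id + 1) with hN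
    have hkN : k ≤ N := le_sup_left
    have hA' : ∀ e : Finset ℕ, e ≤ A → e ⊆ Finset.range N := by
      intro e heA a ha
      have h1 : a ≤ A.sup id := Finset.le_sup (f := id) (heA ha)
      exact Finset.mem_range.mpr (lt_of_lt_of_le (Nat.lt_succ_of_le h1) le_sup_right)
    have hus : u.support ⊆ y.support ∪ Finset.univ.biUnion fun i => (v i).support := by
      intro e he
      rcases Finset.mem_union.mp (Finsupp.support_add he) with h | h
      · exact Finset.mem_union_left _ h
      · refine Finset.mem_union_right _ ?_
        have h2 := Finsupp.support_finset_sum h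
        obtain ⟨i, hi, h3⟩ := Finset.mem_biUnion.mp h2
        exact Finset.mem_biUnion.mpr ⟨i, hi, Finsupp.support_smul h3⟩
    have hsupport : ∀ e ∈ u.support, e.card = k ∧ e ⊆ Finset.range N := by
      intro e he
      rcases Finset.mem_union.mp (hus he) with h | h
      · exact ⟨hI y hy e h, hA' e (le_trans (Finset.le_sup (f := id) h) le_sup_left)⟩
      · obtain ⟨i, _, hi⟩ := Finset.mem_biUnion.mp h
        refine ⟨hI (v i) (hvI i) e hi, hA' e ?_⟩
        exact le_trans (le_trans (Finset.le_sup (f := id) hi)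
          (Finset.le_sup (f := fun i => (v i).support.sup id) (Finset.mem_univ i)))
          le_sup_right
    have hkey := key_zero hkN u hsupport hprojU
    have hlin : ∀ π : ℕ ≃ ℕ, permDV π u = permDV π y + ∑ i, c i • permDV π (v i) := by
      intro π
      show Finsupp.domCongr (M := Fin d → ℤ) π.symm.finsetCongr u = _
      rw [hu, map_add, map_sum]
      congr 1
      refine Finset.sum_congr rfl fun i _ => ?_
      rw [map_nsmul]
      rfl
    have h0 : ((∑ σ : Equiv.Perm (Fin N), permDV (extN N σ) y)
        + ∑ σ : Equiv.Perm (Fin N), ∑ i, c i • permDV (extN N σ) (v i)) = 0 := by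
      rw [← Finset.sum_add_distrib, ← hkey]
      exact Finset.sum_congr rfl fun σ _ => (hlin (extN N σ)).symm
    have hsplit : ∑ σ : Equiv.Perm (Fin N), permDV (extN N σ) y
        = (∑ σ ∈ Finset.univ.erase 1, permDV (extN N σ) y) + y := by
      rw [← Finset.sum_erase_add _ _ (Finset.mem_univ 1), extN_one, permDV_one]
    have hexpr : -y = (∑ σ ∈ Finset.univ.erase 1, permDV (extN N σ) y)
        + ∑ σ : Equiv.Perm (Fin N), ∑ i, c i • permDV (extN N σ) (v i) := by
      rw [hsplit] at h0
      have h0' : y + ((∑ σ ∈ Finset.univ.erase 1, permDV (extN N σ) y)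
          + ∑ σ : Equiv.Perm (Fin N), ∑ i, c i • permDV (extN N σ) (v i)) = 0 := by
        rw [← h0]; abel
      exact neg_eq_of_add_eq_zero_right h0'
    refine (nsum_mem_iff (Perm I) (-y)).mpr ?_
    rw [hexpr]
    refine AddSubmonoid.add_mem _ ?_ ?_
    · exact AddSubmonoid.sum_mem _ fun σ _ =>
        AddSubmonoid.subset_closure (show permDV (extN N σ) y ∈ Perm I from ⟨y, hy, extN N σ, rfl⟩)
    · exact AddSubmonoid.sum_mem _ fun σ _ => AddSubmonoid.sum_mem _ fun i _ =>
        AddSubmonoid.nsmul_mem _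
          (AddSubmonoid.subset_closure (show permDV (extN N σ) (v i) ∈ Perm I from ⟨v i, hvI i, extN N σ, rfl⟩)) _
end

section
/- Let U₁ and U₂ be two finite sets of vectors in ℤ^d such that every vector in U₂ is nonreversible in U = U₁ ∪ U₂. Suppose y ∈ Σ_ℕ(U), and consider any solution y = Σ_{v ∈ U₁} a_v·v + Σ_{w ∈ U₂} b_w·w with a_v, b_w ∈ ℕ. Then Σ_{w ∈ U₂} b_w ≤ |U₂| · (‖U‖_{1,∞} + ‖y‖_∞ + 2)^{d + |U|}. -/
/-- The infinity norm `‖u‖_∞ = max_i |u_i|` of a vector `u ∈ ℤ^d`. -/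
def linf {d : ℕ} (u : Fin d → ℤ) : ℕ := Finset.univ.sup fun i => (u i).natAbs

/-- The one-norm `‖u‖₁ = Σ_i |u_i|` of a vector `u ∈ ℤ^d`. -/
def l1 {d : ℕ} (u : Fin d → ℤ) : ℕ := ∑ i, (u i).natAbs



-- L0: (s+1)^k ≤ 3 s^k for k ≤ s
lemma exp3 {s k : ℕ} (h : k ≤ s) : (s + 1) ^ k ≤ 3 * s ^ k := by
  rcases Nat.eq_zero_or_pos k with hk | hk
  · subst hk; simp
  have hs : 0 < s := lt_of_lt_of_le hk h
  have hsR : (0:ℝ) < s := by exact_mod_cast hs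
  have key : ((s:ℝ) + 1) ^ k ≤ 3 * (s:ℝ) ^ k := by
    have h1 : ((s:ℝ) + 1) = s * (1 + 1/s) := by field_simp
    have h2 : (1 + 1/(s:ℝ)) ^ k ≤ (1 + 1/(s:ℝ)) ^ s := by
      apply pow_le_pow_right₀ _ h
      have : (0:ℝ) < 1/s := by positivity
      linarith
    have h3 : (1 + 1/(s:ℝ)) ^ s ≤ Real.exp (1/s) ^ s := by
      apply pow_le_pow_left₀ _ _ s
      · positivity
      · linarith [Real.add_one_le_exp (1/(s:ℝ))]
    have h4 : Real.exp (1/(s:ℝ)) ^ s = Real.exp 1 := by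
      rw [← Real.exp_nat_mul]
      congr 1
      field_simp
    have h5 : Real.exp 1 ≤ 3 := by
      have := Real.exp_one_lt_d9
      linarith
    calc ((s:ℝ) + 1) ^ k = (s:ℝ)^k * (1 + 1/s)^k := by rw [h1, mul_pow]
      _ ≤ (s:ℝ)^k * 3 := by
          apply mul_le_mul_of_nonneg_left _ (by positivity)
          calc (1 + 1/(s:ℝ))^k ≤ (1 + 1/(s:ℝ))^s := h2
            _ ≤ Real.exp (1/s) ^ s := h3
            _ = Real.exp 1 := h4
            _ ≤ 3 := h5
      _ = 3 * (s:ℝ)^k := by ring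
  exact_mod_cast key


-- step lemma: for j ≥ k+1, 2(x+j+1)^k ≤ (x+k+1)(x+j)^k
lemma step_ineq (x k j : ℕ) (hx : 1 ≤ x) (hk : 1 ≤ k) (hj : k + 1 ≤ j) :
    2 * (x + j + 1) ^ k ≤ (x + k + 1) * (x + j) ^ k := by
  rcases le_or_gt 6 (x + k + 1) with h6 | h6
  · have hks : k ≤ x + j := by omega
    have := exp3 (s := x + j) (k := k) hks
    calc 2 * (x + j + 1) ^ k = 2 * (x + j + 1) ^ k := rfl
      _ ≤ 2 * (3 * (x + j) ^ k) := by
          apply Nat.mul_le_mul_left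
          exact this
      _ = 6 * (x + j) ^ k := by ring
      _ ≤ (x + k + 1) * (x + j) ^ k := Nat.mul_le_mul_right _ h6
  · -- x + k ≤ 4
    have hx3 : x ≤ 3 := by omega
    have hk3 : k ≤ 3 := by omega
    interval_cases x <;> interval_cases k <;> first
      | omega
      | (ring_nf; nlinarith [sq_nonneg j, hj])

lemma L1 (x k : ℕ) (hx : 1 ≤ x) (hk : 1 ≤ k) :
    ∀ j, 2 ^ j * (x + j) ^ k ≤ (x + k + 1) ^ (k + j) := by
  have base : ∀ j, j ≤ k + 1 → 2 ^ j * (x + j) ^ k ≤ (x + k + 1) ^ (k + j) := by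
    intro j hj
    rcases Nat.eq_zero_or_pos j with hj0 | hj0
    · subst hj0
      simpa using Nat.pow_le_pow_left (by omega : x ≤ x + k + 1) k
    · have h2 : 2 ^ j ≤ (x + j) ^ j := Nat.pow_le_pow_left (by omega) j
      calc 2 ^ j * (x + j) ^ k ≤ (x + j) ^ j * (x + j) ^ k :=
            Nat.mul_le_mul_right _ h2
        _ = (x + j) ^ (k + j) := by rw [← pow_add]; ring_nf
        _ ≤ (x + k + 1) ^ (k + j) := Nat.pow_le_pow_left (by omega) _
  intro j
  rcases le_or_gt j (k + 1) with hle | hgt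
  · exact base j hle
  · -- induction from k+1 upwards
    have : ∀ m, 2 ^ (k + 1 + m) * (x + (k + 1 + m)) ^ k ≤ (x + k + 1) ^ (k + (k + 1 + m)) := by
      intro m
      induction m with
      | zero => exact base (k+1) le_rfl
      | succ m ih =>
        have hstep := step_ineq x k (k + 1 + m) hx hk (by omega)
        have : 2 ^ (k + 1 + (m + 1)) * (x + (k + 1 + (m + 1))) ^ k
            = 2 ^ (k + 1 + m) * (2 * (x + (k + 1 + m) + 1) ^ k) := by ring
        rw [this]
        calc 2 ^ (k + 1 + m) * (2 * (x + (k + 1 + m) + 1) ^ k)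
            ≤ 2 ^ (k + 1 + m) * ((x + k + 1) * (x + (k + 1 + m)) ^ k) :=
              Nat.mul_le_mul_left _ hstep
          _ = (x + k + 1) * (2 ^ (k + 1 + m) * (x + (k + 1 + m)) ^ k) := by ring
          _ ≤ (x + k + 1) * (x + k + 1) ^ (k + (k + 1 + m)) := Nat.mul_le_mul_left _ ih
          _ = (x + k + 1) ^ (k + (k + 1 + (m + 1))) := by rw [← pow_succ']; ring_nf
    have hm : j = k + 1 + (j - (k+1)) := by omega
    rw [hm]
    exact this (j - (k+1))


lemma L2 (n C Y d : ℕ) (r : Fin d → ℕ) (hn : 1 ≤ n) (hC : 1 ≤ C)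
    (hr : ∑ j, r j ≤ n * C) :
    n * ∏ j, (Y + 1 + r j) ≤ (Y + C + 2) ^ (d + n) := by
  set M := Y + C + 2 with hM
  set R := ∑ j, r j with hR
  have hM2 : 2 ≤ M := by omega
  have hper : ∀ j : Fin d, 2 ^ (r j) * (Y + 1 + r j) ^ C ≤ M ^ (C + r j) := by
    intro j
    have := L1 (Y + 1) C (by omega) hC (r j)
    calc 2 ^ (r j) * (Y + 1 + r j) ^ C = 2 ^ (r j) * ((Y+1) + r j) ^ C := by ring_nf
      _ ≤ ((Y+1) + C + 1) ^ (C + r j) := this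
      _ = M ^ (C + r j) := by rw [hM]; ring_nf
  have hprod : 2 ^ R * (∏ j, (Y + 1 + r j)) ^ C ≤ M ^ (d * C + R) := by
    have h1 : ∏ j, (2 ^ (r j) * (Y + 1 + r j) ^ C) ≤ ∏ j : Fin d, M ^ (C + r j) :=
      Finset.prod_le_prod (fun _ _ => Nat.zero_le _) (fun j _ => hper j)
    calc 2 ^ R * (∏ j, (Y + 1 + r j)) ^ C
        = ∏ j, (2 ^ (r j) * (Y + 1 + r j) ^ C) := by
          rw [Finset.prod_mul_distrib, Finset.prod_pow_eq_pow_sum, ← Finset.prod_pow]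
      _ ≤ ∏ j : Fin d, M ^ (C + r j) := h1
      _ = M ^ (d * C + R) := by
          rw [Finset.prod_pow_eq_pow_sum]
          congr 1
          rw [Finset.sum_add_distrib]
          simp [hR, mul_comm]
  -- combine with n^C ≤ 2^(n*C)
  have hn2 : n ^ C ≤ 2 ^ (n * C) := by
    calc n ^ C ≤ (2 ^ n) ^ C := Nat.pow_le_pow_left (Nat.le_of_lt (Nat.lt_two_pow_self (n := n))) C
      _ = 2 ^ (n * C) := by rw [← pow_mul]
  have key : (n * ∏ j, (Y + 1 + r j)) ^ C * 2 ^ R ≤ M ^ ((d + n) * C) * 2 ^ R := by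
    calc (n * ∏ j, (Y + 1 + r j)) ^ C * 2 ^ R
        = n ^ C * (2 ^ R * (∏ j, (Y + 1 + r j)) ^ C) := by rw [mul_pow]; ring
      _ ≤ 2 ^ (n * C) * M ^ (d * C + R) := by
          exact Nat.mul_le_mul hn2 hprod
      _ = 2 ^ R * (2 ^ (n * C - R) * M ^ (d * C + R)) := by
          rw [← mul_assoc, ← pow_add]
          congr 2
          omega
      _ ≤ 2 ^ R * (M ^ (n * C - R) * M ^ (d * C + R)) := by
          apply Nat.mul_le_mul_left
          exact Nat.mul_le_mul_right _ (Nat.pow_le_pow_left hM2 _)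
      _ = M ^ ((d + n) * C) * 2 ^ R := by
          rw [← pow_add]
          have he : n * C - R + (d * C + R) = (d + n) * C := by
            rw [add_mul]; omega
          rw [he, mul_comm]
  have key2 : (n * ∏ j, (Y + 1 + r j)) ^ C ≤ (M ^ (d + n)) ^ C := by
    have := Nat.le_of_mul_le_mul_right key (by positivity : 0 < 2 ^ R)
    rwa [pow_mul] at this
  exact (Nat.pow_le_pow_iff_left (by omega : C ≠ 0)).mp key2



lemma core (d n : ℕ) (u : Fin n → (Fin d → ℤ)) (c : Fin n → ℕ) (C Y : ℕ)
    (hn : 1 ≤ n) (hC : 1 ≤ C)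
    (hl1 : ∀ i, l1 (u i) ≤ C)
    (y : Fin d → ℤ)
    (hy : ∀ j, (y j).natAbs ≤ Y)
    (hsol : ∑ i, c i • u i = y)
    (hmin : ∀ g : Fin n → ℕ, (∀ i, g i ≤ c i) → ∑ i, g i • u i = 0 → ∀ i, g i = 0) :
    ∑ i, c i < (Y + C + 2) ^ (d + n) := by
  set N := ∑ i, c i with hN
  rcases Nat.eq_zero_or_pos N with hN0 | hNpos
  · rw [hN0]
    exact Nat.pow_pos (by omega)
  -- the Bresenham-like chain
  set x : ℕ → Fin n → ℕ := fun t i => t * c i / N with hx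
  set v : ℕ → (Fin d → ℤ) := fun t => ∑ i, (x t i) • u i with hv
  have hxc : ∀ t, t ≤ N → ∀ i, x t i ≤ c i := by
    intro t ht i
    calc x t i = t * c i / N := rfl
      _ ≤ N * c i / N := Nat.div_le_div_right (Nat.mul_le_mul_right _ ht)
      _ = c i := Nat.mul_div_cancel_left _ hNpos
  have hxmono : ∀ s t, s ≤ t → ∀ i, x s i ≤ x t i := by
    intro s t hst i
    exact Nat.div_le_div_right (Nat.mul_le_mul_right _ hst)
  have hsum_le : ∀ t, ∑ i, x t i ≤ t := by
    intro t
    have h1 : (∑ i, x t i) * N ≤ t * N := by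
      calc (∑ i, x t i) * N = ∑ i, (t * c i / N) * N := Finset.sum_mul ..
        _ ≤ ∑ i, t * c i := Finset.sum_le_sum (fun i _ => Nat.div_mul_le_self _ _)
        _ = t * N := by rw [← Finset.mul_sum]
    exact Nat.le_of_mul_le_mul_right h1 hNpos
  have hsum_gt : ∀ t, t < ∑ i, x t i + n := by
    intro t
    have h1 : t * N < (∑ i, x t i + n) * N := by
      calc t * N = ∑ i, t * c i := by rw [← Finset.mul_sum]
        _ < ∑ i, (x t i * N + N) := by
            apply Finset.sum_lt_sum_of_nonempty
            · exact Finset.univ_nonempty_iff.mpr (Fin.pos_iff_nonempty.mp (by omega))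
            · intro i _
              simp only [hx]
              have h1 := Nat.div_add_mod (t * c i) N
              have h2 := Nat.mod_lt (t * c i) hNpos
              calc t * c i = N * (t * c i / N) + t * c i % N := h1.symm
                _ < N * (t * c i / N) + N := Nat.add_lt_add_left h2 _
                _ = t * c i / N * N + N := by rw [Nat.mul_comm]
        _ = (∑ i, x t i + n) * N := by
            rw [Finset.sum_add_distrib, Finset.sum_const, Finset.card_univ,
              Fintype.card_fin, add_mul, Finset.sum_mul]
            simp [mul_comm]
    exact Nat.lt_of_mul_lt_mul_right h1
  set F : ℕ → (Fin d → ℤ) × ℕ := fun t => (v t, t - ∑ i, x t i) with hF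
  have key : ∀ s t, s ≤ t → t ≤ N → F s = F t → s = t := by
    intro s t hst htN hFeq
    have hv_eq : v s = v t := congrArg Prod.fst hFeq
    set g : Fin n → ℕ := fun i => x t i - x s i with hg
    have hgc : ∀ i, g i ≤ c i := fun i => le_trans (Nat.sub_le _ _) (hxc t htN i)
    have hsplit : ∀ i, g i + x s i = x t i := fun i => Nat.sub_add_cancel (hxmono s t hst i)
    have hgsum : ∑ i, g i • u i = 0 := by
      have h1 : ∑ i, g i • u i + v s = v t := by
        rw [hv]
        rw [← Finset.sum_add_distrib]
        apply Finset.sum_congr rfl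
        intro i _
        rw [← add_smul, hsplit i]
      rw [hv_eq] at h1
      have h2 : ∑ i, g i • u i + v t = 0 + v t := by rw [h1, zero_add]
      exact add_right_cancel h2
    have hg0 := hmin g hgc hgsum
    have hxeq : ∑ i, x s i = ∑ i, x t i :=
      Finset.sum_congr rfl (fun i _ => by have h3 := hsplit i; have h4 := hg0 i; omega)
    have hsnd : s - ∑ i, x s i = t - ∑ i, x t i := congrArg Prod.snd hFeq
    have h1 := hsum_le s
    have h2 := hsum_le t
    omega
  have hinj : Set.InjOn F (Finset.range (N + 1) : Finset ℕ) := by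
    intro s hs t ht hFeq
    rw [Finset.mem_coe, Finset.mem_range] at hs ht
    rcases le_total s t with h | h
    · exact key s t h (by omega) hFeq
    · exact (key t s h (by omega) hFeq.symm).symm
  set lo : Fin d → ℤ := fun j => min (y j) 0 - ∑ i, max (u i j) 0 with hlo
  set hi : Fin d → ℤ := fun j => max (y j) 0 + ∑ i, max (-(u i j)) 0 with hhi
  set S : Finset ((Fin d → ℤ) × ℕ) := Finset.Icc lo hi ×ˢ Finset.range n with hS
  have hyj : ∀ j, (∑ i, (c i : ℤ) * u i j) = y j := by
    intro j
    have h0 := congrFun hsol j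
    rw [Finset.sum_apply] at h0
    rw [← h0]
    apply Finset.sum_congr rfl
    intro i _
    simp [nsmul_eq_mul]
  have hvj : ∀ t j, (v t) j = ∑ i, (x t i : ℤ) * u i j := by
    intro t j
    have hrfl : v t = ∑ i, x t i • u i := rfl
    rw [hrfl, Finset.sum_apply]
    apply Finset.sum_congr rfl
    intro i _
    rw [Pi.smul_apply, nsmul_eq_mul]
  have hmem : ∀ t ∈ Finset.range (N + 1), F t ∈ S := by
    intro t ht
    rw [Finset.mem_range] at ht
    have htN : t ≤ N := by omega
    rw [hS, Finset.mem_product]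
    constructor
    · -- first component in Icc
      rw [Finset.mem_Icc]
      have hNv : ∀ j, (N : ℤ) * (v t) j = t * y j - ∑ i, ((t * c i % N : ℕ) : ℤ) * u i j := by
        intro j
        rw [hvj t j, Finset.mul_sum, ← hyj j, Finset.mul_sum, ← Finset.sum_sub_distrib]
        apply Finset.sum_congr rfl
        intro i _
        simp only [hx]
        have h5 := Nat.div_add_mod (t * c i) N
        have hdm : (N : ℤ) * ((t * c i / N : ℕ) : ℤ) + ((t * c i % N : ℕ) : ℤ) = (t : ℤ) * (c i : ℤ) := by
          exact_mod_cast h5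
        linear_combination (u i j) * hdm
      have hebound : ∀ i, (0 : ℤ) ≤ ((t * c i % N : ℕ) : ℤ) ∧ ((t * c i % N : ℕ) : ℤ) ≤ (N : ℤ) - 1 := by
        intro i
        constructor
        · positivity
        · have := Nat.mod_lt (t * c i) hNpos
          omega
      constructor
      · -- lo ≤ v t
        rw [Pi.le_def]
        intro j
        have hmul : (N : ℤ) * lo j ≤ (N : ℤ) * (v t) j := by
          rw [hNv j]
          have h1 : (N : ℤ) * min (y j) 0 ≤ t * y j := by
            rcases le_or_gt 0 (y j) with hy0 | hy0
            · have : min (y j) 0 = 0 := by omega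
              rw [this]
              positivity
            · have : min (y j) 0 = y j := by omega
              rw [this]
              have ht' : (t : ℤ) ≤ (N : ℤ) := by exact_mod_cast htN
              nlinarith
          have h2 : ∑ i, ((t * c i % N : ℕ) : ℤ) * u i j ≤ (N : ℤ) * ∑ i, max (u i j) 0 := by
            rw [Finset.mul_sum]
            apply Finset.sum_le_sum
            intro i _
            obtain ⟨he1, he2⟩ := hebound i
            have hm1 : u i j ≤ max (u i j) 0 := le_max_left _ _
            have hm2 : (0 : ℤ) ≤ max (u i j) 0 := le_max_right _ _
            nlinarith
          simp only [hlo, mul_sub]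
          linarith
        exact le_of_mul_le_mul_left hmul (by exact_mod_cast hNpos)
      · -- v t ≤ hi
        rw [Pi.le_def]
        intro j
        have hmul : (N : ℤ) * (v t) j ≤ (N : ℤ) * hi j := by
          rw [hNv j]
          have h1 : (t : ℤ) * y j ≤ (N : ℤ) * max (y j) 0 := by
            rcases le_or_gt 0 (y j) with hy0 | hy0
            · have : max (y j) 0 = y j := by omega
              rw [this]
              have ht' : (t : ℤ) ≤ (N : ℤ) := by exact_mod_cast htN
              nlinarith
            · have : max (y j) 0 = 0 := by omega
              rw [this]
              have ht' : (0 : ℤ) ≤ (t : ℤ) := by positivity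
              nlinarith
          have h2 : -(∑ i, ((t * c i % N : ℕ) : ℤ) * u i j) ≤ (N : ℤ) * ∑ i, max (-(u i j)) 0 := by
            rw [Finset.mul_sum, ← Finset.sum_neg_distrib]
            apply Finset.sum_le_sum
            intro i _
            obtain ⟨he1, he2⟩ := hebound i
            have hm1 : -(u i j) ≤ max (-(u i j)) 0 := le_max_left _ _
            have hm2 : (0 : ℤ) ≤ max (-(u i j)) 0 := le_max_right _ _
            nlinarith
          simp only [hhi, mul_add]
          linarith
        exact le_of_mul_le_mul_left hmul (by exact_mod_cast hNpos)
    · -- second component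
      simp only [hF, Finset.mem_range]
      have h1 := hsum_gt t
      have h2 := hsum_le t
      omega
  have hcard : N + 1 ≤ S.card := by
    have h1 : (Finset.range (N + 1)).card ≤ S.card :=
      Finset.card_le_card_of_injOn F hmem hinj
    simpa using h1
  set R : Fin d → ℕ := fun j => ∑ i, (u i j).natAbs with hR
  have hIcc : (Finset.Icc lo hi).card = ∏ j, ((y j).natAbs + R j + 1) := by
    rw [Pi.card_Icc]
    apply Finset.prod_congr rfl
    intro j _
    rw [Int.card_Icc]
    have h1 : max (y j) 0 - min (y j) 0 = |y j| := by
      rcases le_total (y j) 0 with h | h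
      · rw [max_eq_right h, min_eq_left h, abs_of_nonpos h]
        ring
      · rw [max_eq_left h, min_eq_right h, abs_of_nonneg h]
        ring
    have h2 : ∑ i, max (-(u i j)) 0 + ∑ i, max (u i j) 0 = ((R j : ℕ) : ℤ) := by
      simp only [hR]
      push_cast
      rw [← Finset.sum_add_distrib]
      apply Finset.sum_congr rfl
      intro i _
      rcases le_total (u i j) 0 with h | h
      · rw [max_eq_left (by linarith : (0:ℤ) ≤ -u i j), max_eq_right h, abs_of_nonpos h]
        ring
      · rw [max_eq_right (by linarith : -u i j ≤ (0:ℤ)), max_eq_left h, abs_of_nonneg h]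
        ring
    have hval : hi j + 1 - lo j = (((y j).natAbs + R j + 1 : ℕ) : ℤ) := by
      simp only [hhi, hlo]
      push_cast
      linarith [h1, h2]
    rw [hval, Int.toNat_natCast]
  have hScard : S.card = (∏ j, ((y j).natAbs + R j + 1)) * n := by
    rw [hS, Finset.card_product, hIcc, Finset.card_range]
  have hprodle : ∏ j, ((y j).natAbs + R j + 1) ≤ ∏ j, (Y + 1 + R j) := by
    apply Finset.prod_le_prod' 
    intro j _
    have := hy j
    omega
  have hRsum : ∑ j, R j ≤ n * C := by
    have h1 : ∑ j, R j = ∑ i, l1 (u i) := by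
      rw [hR]
      rw [Finset.sum_comm]
      rfl
    rw [h1]
    calc ∑ i, l1 (u i) ≤ ∑ _i : Fin n, C := Finset.sum_le_sum (fun i _ => hl1 i)
      _ = n * C := by rw [Finset.sum_const, Finset.card_univ, Fintype.card_fin, smul_eq_mul]
  have hfinal : N + 1 ≤ (Y + C + 2) ^ (d + n) := by
    calc N + 1 ≤ S.card := hcard
      _ = (∏ j, ((y j).natAbs + R j + 1)) * n := hScard
      _ ≤ (∏ j, (Y + 1 + R j)) * n := Nat.mul_le_mul_right _ hprodle
      _ = n * ∏ j, (Y + 1 + R j) := Nat.mul_comm _ _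
      _ ≤ (Y + C + 2) ^ (d + n) := L2 n C Y d R hn hC hRsum
  omega

/-- **Lemma (bound on the use of nonreversible vectors).**
Let `U₁, U₂` be two finite sets of vectors in `ℤ^d` such that every vector in
`U₂` is nonreversible in `U = U₁ ∪ U₂` (i.e. `−w ∉ Σ_ℕ(U)` for `w ∈ U₂`).
For any solution `y = Σ_{v ∈ U₁} a_v·v + Σ_{w ∈ U₂} b_w·w` with coefficients
`a_v, b_w ∈ ℕ`, we have
`Σ_{w ∈ U₂} b_w ≤ |U₂| · (‖U‖_{1,∞} + ‖y‖_∞ + 2)^(d + |U|)`. -/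
theorem bound_nonreversible
    (d : ℕ) (hd : 1 ≤ d)
    (U₁ U₂ : Finset (Fin d → ℤ))
    (hnonrev : ∀ w ∈ U₂, ¬ (-w ∈ NsumV ((↑(U₁ ∪ U₂) : Set (Fin d → ℤ)))))
    (y : Fin d → ℤ) (a b : (Fin d → ℤ) → ℕ)
    (hsol : y = ∑ v ∈ U₁, a v • v + ∑ w ∈ U₂, b w • w) :
    ∑ w ∈ U₂, b w ≤
      U₂.card * ((U₁ ∪ U₂).sup l1 + linf y + 2) ^ (d + (U₁ ∪ U₂).card) := by
  classical
  rcases Finset.eq_empty_or_nonempty U₂ with hU2 | hU2ne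
  · simp [hU2]
  set V := U₁ ∪ U₂ with hV
  set n := V.card with hn
  set C := V.sup l1 with hC
  set Y := linf y with hY
  have hVne : V.Nonempty := hU2ne.mono Finset.subset_union_right
  have hn1 : 1 ≤ n := Finset.card_pos.mpr hVne
  set e := V.equivFin with he
  set u : Fin n → (Fin d → ℤ) := fun i => (e.symm i : Fin d → ℤ) with hu
  have humem : ∀ i, u i ∈ V := fun i => (e.symm i).2
  -- reindexing lemmas
  have hsum_vec : ∀ (f : (Fin d → ℤ) → (Fin d → ℤ)), ∑ i, f (u i) = ∑ w ∈ V, f w := by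
    intro f
    calc ∑ i, f (u i) = ∑ w : {z // z ∈ V}, f ↑w := Equiv.sum_comp e.symm (fun w => f ↑w)
      _ = ∑ w ∈ V, f w := Finset.sum_coe_sort V f
  have hsum_nat : ∀ (f : (Fin d → ℤ) → ℕ), ∑ i, f (u i) = ∑ w ∈ V, f w := by
    intro f
    calc ∑ i, f (u i) = ∑ w : {z // z ∈ V}, f ↑w := Equiv.sum_comp e.symm (fun w => f ↑w)
      _ = ∑ w ∈ V, f w := Finset.sum_coe_sort V f
  -- the combined coefficients
  set c₀ : Fin n → ℕ :=
    fun i => (if u i ∈ U₁ then a (u i) else 0) + (if u i ∈ U₂ then b (u i) else 0) with hc₀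
  have hfilter1 : V.filter (· ∈ U₁) = U₁ := by
    rw [Finset.filter_mem_eq_inter]
    exact Finset.inter_eq_right.mpr Finset.subset_union_left
  have hfilter2 : V.filter (· ∈ U₂) = U₂ := by
    rw [Finset.filter_mem_eq_inter]
    exact Finset.inter_eq_right.mpr Finset.subset_union_right
  have hsol₀ : ∑ i, c₀ i • u i = y := by
    have h1 : ∑ i, c₀ i • u i
        = ∑ w ∈ V, ((if w ∈ U₁ then a w else 0) + (if w ∈ U₂ then b w else 0)) • w :=
      hsum_vec (fun w => ((if w ∈ U₁ then a w else 0) + (if w ∈ U₂ then b w else 0)) • w)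
    rw [h1]
    have h2 : ∀ w ∈ V, ((if w ∈ U₁ then a w else 0) + (if w ∈ U₂ then b w else 0)) • w
        = (if w ∈ U₁ then a w • w else 0) + (if w ∈ U₂ then b w • w else 0) := by
      intro w _
      rw [add_smul]
      congr 1 <;> split <;> simp
    rw [Finset.sum_congr rfl h2, Finset.sum_add_distrib]
    rw [← Finset.sum_filter, ← Finset.sum_filter, hfilter1, hfilter2]
    exact hsol.symm
  -- minimal solution below c₀
  set T : Set ℕ :=
    {m | ∃ cc : Fin n → ℕ, (∀ i, cc i ≤ c₀ i) ∧ (∑ i, cc i • u i = y) ∧ (∑ i, cc i = m)} with hT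
  have hTne : (∑ i, c₀ i) ∈ T := ⟨c₀, fun i => le_rfl, hsol₀, rfl⟩
  obtain ⟨c, hcle, hcsol, hcsum⟩ := Nat.sInf_mem (Set.nonempty_of_mem hTne)
  have hmin : ∀ g : Fin n → ℕ, (∀ i, g i ≤ c i) → ∑ i, g i • u i = 0 → ∀ i, g i = 0 := by
    intro g hg hg0
    by_contra hne
    push_neg at hne
    obtain ⟨i₀, hi₀⟩ := hne
    have hsub : ∑ i, (c i - g i) • u i = y := by
      calc ∑ i, (c i - g i) • u i = ∑ i, (c i - g i) • u i + ∑ i, g i • u i := by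
            rw [hg0, add_zero]
        _ = ∑ i, ((c i - g i) • u i + g i • u i) := Finset.sum_add_distrib.symm
        _ = ∑ i, c i • u i := Finset.sum_congr rfl (fun i _ => by
            rw [← add_smul]
            congr 1
            have := hg i
            omega)
        _ = y := hcsol
    have hmemT : (∑ i, (c i - g i)) ∈ T :=
      ⟨_, fun i => le_trans (Nat.sub_le _ _) (hcle i), hsub, rfl⟩
    have hlt : ∑ i, (c i - g i) < ∑ i, c i := by
      apply Finset.sum_lt_sum (fun i _ => Nat.sub_le _ _)
      exact ⟨i₀, Finset.mem_univ _, by have h5 := hg i₀; omega⟩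
    have := Nat.sInf_le hmemT
    omega
  -- on U₂, the minimal solution uses the same coefficients
  have hc2 : ∀ i, u i ∈ U₂ → c₀ i = c i := by
    intro i₀ hi₀
    by_contra hne
    have hlt : c i₀ < c₀ i₀ := lt_of_le_of_ne (hcle i₀) (fun h => hne h.symm)
    have hzero : ∑ i, (c₀ i - c i) • u i = 0 := by
      have h1 : ∑ i, (c₀ i - c i) • u i + ∑ i, c i • u i = ∑ i, c₀ i • u i := by
        rw [← Finset.sum_add_distrib]
        apply Finset.sum_congr rfl
        intro i _
        rw [← add_smul]
        congr 1
        have := hcle i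
        omega
      rw [hcsol, hsol₀] at h1
      rwa [add_eq_right] at h1
    apply hnonrev (u i₀) hi₀
    set g : Fin n → ℕ := fun i => (c₀ i - c i) - (if i = i₀ then 1 else 0) with hg
    refine ⟨n, g, u, fun i => humem i, ?_⟩
    have h2 : ∑ i, g i • u i + ∑ i, (if i = i₀ then 1 else 0) • u i = 0 := by
      rw [← Finset.sum_add_distrib, ← hzero]
      apply Finset.sum_congr rfl
      intro i _
      rw [← add_smul]
      congr 1
      rcases eq_or_ne i i₀ with h | h
      · subst h
        simp only [hg, reduceIte]
        have h6 := hcle i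
        omega
      · simp only [hg, if_neg h]
        omega
    have h3 : ∑ i, (if i = i₀ then 1 else 0) • u i = u i₀ := by
      have : ∀ i, (if i = i₀ then 1 else 0) • u i = (if i = i₀ then u i else 0) := by
        intro i
        split <;> simp
      rw [Finset.sum_congr rfl (fun i _ => this i)]
      simp
    rw [h3] at h2
    exact (eq_neg_of_add_eq_zero_left h2).symm
  -- C ≥ 1
  obtain ⟨w₂, hw₂⟩ := hU2ne
  have hw₂0 : w₂ ≠ 0 := by
    intro h0
    apply hnonrev w₂ hw₂
    refine ⟨0, fun i => i.elim0, fun i => i.elim0, fun i => i.elim0, ?_⟩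
    simp [h0]
  have hC1 : 1 ≤ C := by
    have hl1pos : 1 ≤ l1 w₂ := by
      by_contra h
      push_neg at h
      have h0 : l1 w₂ = 0 := by omega
      apply hw₂0
      funext j
      have hj : (w₂ j).natAbs = 0 := by
        have := Finset.sum_eq_zero_iff.mp h0 j (Finset.mem_univ j)
        exact this
      have := Int.natAbs_eq_zero.mp hj
      simpa using this
    exact le_trans hl1pos (Finset.le_sup (Finset.mem_union_right _ hw₂))
  have hl1u : ∀ i, l1 (u i) ≤ C := fun i => Finset.le_sup (humem i)
  have hyY : ∀ j, (y j).natAbs ≤ Y := by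
    intro j
    rw [hY, linf]
    exact Finset.le_sup (f := fun i => (y i).natAbs) (Finset.mem_univ j)
  have hcore := core d n u c C Y hn1 hC1 hl1u y hyY hcsol hmin
  have hble : ∀ i, (if u i ∈ U₂ then b (u i) else 0) ≤ c i := by
    intro i
    by_cases h : u i ∈ U₂
    · rw [if_pos h]
      have h7 := hc2 i h
      have h9 : b (u i) ≤ c₀ i := by
        simp only [hc₀, if_pos h]
        exact Nat.le_add_left _ _
      omega
    · rw [if_neg h]
      exact Nat.zero_le _
  have hsum2 : ∑ w ∈ U₂, b w = ∑ i, (if u i ∈ U₂ then b (u i) else 0) := by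
    calc ∑ w ∈ U₂, b w = ∑ w ∈ V, (if w ∈ U₂ then b w else 0) := by
          rw [← Finset.sum_filter, hfilter2]
      _ = ∑ i, (if u i ∈ U₂ then b (u i) else 0) :=
          (hsum_nat (fun w => if w ∈ U₂ then b w else 0)).symm
  have hfin1 : ∑ w ∈ U₂, b w ≤ ∑ i, c i := by
    rw [hsum2]
    exact Finset.sum_le_sum (fun i _ => hble i)
  have hcard2 : 1 ≤ U₂.card := Finset.card_pos.mpr ⟨w₂, hw₂⟩
  calc ∑ w ∈ U₂, b w ≤ ∑ i, c i := hfin1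
    _ ≤ (Y + C + 2) ^ (d + n) := le_of_lt hcore
    _ = (C + Y + 2) ^ (d + n) := by ring_nf
    _ ≤ U₂.card * (C + Y + 2) ^ (d + n) := Nat.le_mul_of_pos_left _ hcard2
end
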